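/- Let W₀ and W₁ be finite-dimensional complex vector spaces, and let x : W₀ → W₁ and a₁, a₂ : W₁ → W₀ be linear maps such that a₁∘x∘a₂ = a₂∘x∘a₁ and ker(a₁∘x) ∩ ker(a₂∘x) ⊆ ker x. If v₁ ∈ ker(x∘a₁) and v₂ ∈ ker(x∘a₂) satisfy x(a₂(v₁)) = x(a₁(v₂)), then x(a₂(v₁)) = x(a₁(v₂)) = 0. -/
import Mathlib

/-- Let `x : W₀ → W₁` and `a₁, a₂ : W₁ → W₀` be linear maps between
finite-dimensional complex vector spaces with `a₁∘x∘a₂ = a₂∘x∘a₁` and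
`ker(a₁∘x) ∩ ker(a₂∘x) ⊆ ker x`. If `v₁ ∈ ker(x∘a₁)`, `v₂ ∈ ker(x∘a₂)` and
`x(a₂ v₁) = x(a₁ v₂)`, then `x(a₂ v₁) = x(a₁ v₂) = 0`. -/
theorem stmt8 {W₀ W₁ : Type*}
    [AddCommGroup W₀] [Module ℂ W₀] [FiniteDimensional ℂ W₀]
    [AddCommGroup W₁] [Module ℂ W₁] [FiniteDimensional ℂ W₁]
    (x : W₀ →ₗ[ℂ] W₁) (a₁ a₂ : W₁ →ₗ[ℂ] W₀)
    (hcomm : a₁ ∘ₗ x ∘ₗ a₂ = a₂ ∘ₗ x ∘ₗ a₁)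
    (hker : LinearMap.ker (a₁ ∘ₗ x) ⊓ LinearMap.ker (a₂ ∘ₗ x) ≤ LinearMap.ker x)
    (v₁ v₂ : W₁)
    (h₁ : v₁ ∈ LinearMap.ker (x ∘ₗ a₁))
    (h₂ : v₂ ∈ LinearMap.ker (x ∘ₗ a₂))
    (he : x (a₂ v₁) = x (a₁ v₂)) :
    x (a₂ v₁) = 0 ∧ x (a₁ v₂) = 0 := by
  simp only [LinearMap.mem_ker, LinearMap.comp_apply] at h₁ h₂
  have hc1 := LinearMap.congr_fun hcomm v₁
  have hc2 := LinearMap.congr_fun hcomm v₂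
  simp only [LinearMap.comp_apply] at hc1 hc2
  have key : x (a₂ v₁) = 0 := by
    apply hker
    refine Submodule.mem_inf.mpr ⟨?_, ?_⟩ <;>
      simp only [LinearMap.mem_ker, LinearMap.comp_apply]
    · rw [hc1, h₁, map_zero]
    · rw [he, ← hc2, h₂, map_zero]
  exact ⟨key, he ▸ key⟩
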